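/- Let P be a stochastic matrix on a finite set V with invariant distribution p̄ (P p̄ = p̄), and let X ⊆ V with p̄(X) > 0. Define p̄_X(v) = p̄(v)/p̄(X) for v ∈ X and p̄_X(v) = 0 otherwise. Then (P p̄_X)(Xᶜ) = ‖P p̄_X − p̄_X‖_TV. -/

import Mathlib

open Finset

section Defs

variable {S : Type*} [Fintype S]

/-- `p` is a probability distribution on the finite set `S`. -/
def IsProbDist (p : S → ℝ) : Prop := (∀ s, 0 ≤ p s) ∧ ∑ s, p s = 1

/-- The mass `p(X) = ∑_{s ∈ X} p s` of a subset `X`. -/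
noncomputable def mass (p : S → ℝ) (X : Set S) : ℝ := ∑ s, X.indicator p s

/-- Total variation distance `‖p - q‖_TV = (1/2) ∑_s |p s - q s|`. -/
noncomputable def tvDist (p q : S → ℝ) : ℝ := (1/2) * ∑ s, |p s - q s|

/-- A (column-)stochastic matrix `P s' s`: entries nonnegative, columns sum to one. -/
def IsStochastic (P : S → S → ℝ) : Prop :=
  (∀ s' s, 0 ≤ P s' s) ∧ ∀ s, ∑ s', P s' s = 1

/-- Action of a matrix on a distribution: `(P p)(s') = ∑_s P s' s * p s`. -/
def matVec (P : S → S → ℝ) (p : S → ℝ) : S → ℝ := fun s' => ∑ s, P s' s * p s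

open scoped Classical in
/-- Ergodic flow `Q_P(Xᶜ, X) = ∑_{s ∈ X, s' ∉ X} P s' s * pbar s`. -/
noncomputable def ergFlow (P : S → S → ℝ) (pbar : S → ℝ) (X : Set S) : ℝ :=
  ∑ s, ∑ s', if s ∈ X ∧ s' ∉ X then P s' s * pbar s else 0

/-- Bottleneck ratio `Φ_X(P) = Q_P(Xᶜ,X) / pbar(X)`. -/
noncomputable def bottleneck (P : S → S → ℝ) (pbar : S → ℝ) (X : Set S) : ℝ :=
  ergFlow P pbar X / mass pbar X

/-- The distribution `pbar` conditioned on the set `X`. -/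
noncomputable def condDist (pbar : S → ℝ) (X : Set S) : S → ℝ :=
  X.indicator (fun s => pbar s / mass pbar X)

/-- Conductance `Φ(P) = min { Φ_X(P) : 0 < pbar(X) ≤ 1/2 }`. -/
noncomputable def conductance (P : S → S → ℝ) (pbar : S → ℝ) : ℝ :=
  sInf {r | ∃ X : Set S, 0 < mass pbar X ∧ mass pbar X ≤ 1/2 ∧ r = bottleneck P pbar X}

end Defs

section Graph

variable {V : Type*} [Fintype V]

/-- Neighborhood `B(X) = {v ∉ X : (v,v') ∈ E for some v' ∈ X}`. -/
def nbhd (E : V → V → Prop) (X : Set V) : Set V :=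
  {v | v ∉ X ∧ ∃ v' ∈ X, E v v'}

/-- A matrix on `V` is local w.r.t. the graph: `P v' v = 0` whenever `(v,v') ∉ E`. -/
def IsLocalMatrix (E : V → V → Prop) (P : V → V → ℝ) : Prop :=
  ∀ v' v, ¬ E v v' → P v' v = 0

/-- Graph conductance `Φ_pbar`: supremum of `Φ(P)` over local stochastic `P` fixing `pbar`. -/
noncomputable def graphConductance (E : V → V → Prop) (pbar : V → ℝ) : ℝ :=
  sSup {r | ∃ P : V → V → ℝ, IsStochastic P ∧ IsLocalMatrix E P ∧
    matVec P pbar = pbar ∧ r = conductance P pbar}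

/-- A family of stochastic linear maps is local w.r.t. the graph. -/
def IsLocalFamily (E : V → V → Prop) (Ψ : ℕ → (V → ℝ) →ₗ[ℝ] (V → ℝ)) : Prop :=
  ∀ (X : Set V) (p₀ : V → ℝ), IsProbDist p₀ → ∀ t : ℕ,
    mass (Ψ (t+1) p₀) X ≤ mass (Ψ t p₀) X + mass (Ψ t p₀) (nbhd E X)

end Graph

section Lift

variable {C V : Type*} [Fintype C] [Fintype V]

/-- A stochastic matrix on the lifted space `C × V` is local in the lifted sense. -/
def IsLocalLift (E : V → V → Prop) (P : C × V → C × V → ℝ) : Prop :=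
  ∀ c' v' c v, ¬ E v v' → P (c', v') (c, v) = 0

open scoped Classical in
/-- Initialization `F[p](c,v) = p v` if `c = ca v`, else `0`. -/
noncomputable def liftInit (ca : V → C) (p : V → ℝ) : C × V → ℝ :=
  fun x => if x.1 = ca x.2 then p x.2 else 0

/-- Marginal map `f(p̂)(v) = ∑_c p̂(c,v)`. -/
def margDist (phat : C × V → ℝ) : V → ℝ := fun v => ∑ c, phat (c, v)

/-- Induced chain on `V` of a lifted chain `P` with stationary distribution `phat`. -/
noncomputable def inducedChain (P : C × V → C × V → ℝ) (phat : C × V → ℝ) : V → V → ℝ :=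
  fun v' v => ∑ c, ∑ c', (phat (c, v) / margDist phat v) * P (c', v') (c, v)

end Lift

/-- for a stochastic matrix `P` with invariant distribution `p̄` and a
set `X` of positive mass, the mass of `P p̄_X` outside `X` equals the total variation
distance `‖P p̄_X − p̄_X‖_TV`. -/
theorem escape_probability_eq_tvDist
    {V : Type} [Fintype V]
    (P : V → V → ℝ) (hP : IsStochastic P)
    (pbar : V → ℝ) (hpbar : IsProbDist pbar) (hinv : matVec P pbar = pbar)
    (X : Set V) (hX : 0 < mass pbar X) :
    mass (matVec P (condDist pbar X)) Xᶜ
      = tvDist (matVec P (condDist pbar X)) (condDist pbar X) := by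
  classical
  obtain ⟨hPnn, hPcol⟩ := hP
  obtain ⟨hpnn, hpsum⟩ := hpbar
  set M := mass pbar X with hM
  set q := condDist pbar X with hq
  set r := matVec P q with hr
  have hdivnn : ∀ s, 0 ≤ pbar s / M := fun s => div_nonneg (hpnn s) hX.le
  have hqnn : ∀ s, 0 ≤ q s := fun s =>
    Set.indicator_nonneg (fun s _ => hdivnn s) s
  have hrnn : ∀ s, 0 ≤ r s := fun s =>
    Finset.sum_nonneg fun t _ => mul_nonneg (hPnn s t) (hqnn t)
  have hqle : ∀ s, q s ≤ pbar s / M := fun s =>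
    Set.indicator_le_self' (fun s _ => hdivnn s) s
  have hqsum : ∑ s, q s = 1 := by
    have h1 : ∑ s, q s = (∑ s, X.indicator pbar s) / M := by
      rw [Finset.sum_div]
      refine Finset.sum_congr rfl fun s _ => ?_
      simp only [hq, condDist, Set.indicator]
      split <;> simp [hM]
    rw [h1]
    show M / M = 1
    exact div_self hX.ne'
  have hrsum : ∑ s, r s = 1 := by
    rw [hr]
    unfold matVec
    rw [Finset.sum_comm]
    simp_rw [← Finset.sum_mul, hPcol, one_mul]
    exact hqsum
  have hqX : ∀ s, s ∉ X → q s = 0 := fun s hs => Set.indicator_of_notMem hs _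
  have hkey : ∀ v ∈ X, r v ≤ q v := by
    intro v hv
    have h1 : q v = pbar v / M := Set.indicator_of_mem hv _
    have h2 : (∑ s, P v s * pbar s) = pbar v := by
      have := congrFun hinv v
      simpa [matVec] using this
    calc r v = ∑ s, P v s * q s := rfl
      _ ≤ ∑ s, P v s * (pbar s / M) :=
          Finset.sum_le_sum fun s _ => mul_le_mul_of_nonneg_left (hqle s) (hPnn v s)
      _ = (∑ s, P v s * pbar s) / M := by
          rw [Finset.sum_div]
          exact Finset.sum_congr rfl fun s _ => (mul_div_assoc _ _ _).symm
      _ = pbar v / M := by rw [h2]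
      _ = q v := h1.symm
  -- split sums
  have hsplit : ∑ s, X.indicator r s + ∑ s, Xᶜ.indicator r s = 1 := by
    rw [← Finset.sum_add_distrib]
    rw [← hrsum]
    refine Finset.sum_congr rfl fun s _ => ?_
    by_cases hs : s ∈ X
    · simp [Set.indicator_of_mem hs, Set.indicator_of_notMem (by simpa using hs :
        s ∉ Xᶜ)]
    · simp [Set.indicator_of_notMem hs, Set.indicator_of_mem (by simpa using hs :
        s ∈ Xᶜ)]
  have habs : ∑ s, |r s - q s| = 2 * ∑ s, Xᶜ.indicator r s := by
    have h1 : ∀ s, |r s - q s| =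
        X.indicator (fun s => q s - r s) s + Xᶜ.indicator r s := by
      intro s
      by_cases hs : s ∈ X
      · rw [Set.indicator_of_mem hs, Set.indicator_of_notMem (by simpa using hs :
          s ∉ Xᶜ), abs_sub_comm, abs_of_nonneg (sub_nonneg.2 (hkey s hs))]
        ring
      · rw [Set.indicator_of_notMem hs, Set.indicator_of_mem (by simpa using hs :
          s ∈ Xᶜ), hqX s hs, sub_zero, abs_of_nonneg (hrnn s)]
        ring
    have h2 : ∑ s, X.indicator (fun s => q s - r s) s =
        1 - ∑ s, X.indicator r s := by
      have h3 : ∀ s, X.indicator (fun s => q s - r s) s = q s - X.indicator r s := by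
        intro s
        by_cases hs : s ∈ X
        · simp [Set.indicator_of_mem hs]
        · simp [Set.indicator_of_notMem hs, hqX s hs]
      simp_rw [h3]
      rw [Finset.sum_sub_distrib, hqsum]
    calc ∑ s, |r s - q s|
        = ∑ s, (X.indicator (fun s => q s - r s) s + Xᶜ.indicator r s) :=
          Finset.sum_congr rfl fun s _ => h1 s
      _ = (1 - ∑ s, X.indicator r s) + ∑ s, Xᶜ.indicator r s := by
          rw [Finset.sum_add_distrib, h2]
      _ = 2 * ∑ s, Xᶜ.indicator r s := by linarith [hsplit]
  show mass r Xᶜ = tvDist r q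
  unfold mass tvDist
  rw [habs]
  ring
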